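/- arXiv:0902.4177 — 2 statements merged into one kernel-verified Lean document; each statement's English description precedes it below -/
import Mathlib

section
/- Let F = 𝔽_3 (ZMod 3) and let C = { (u·(1 + z + z²), u·(2 + z + 2z²)) : u ∈ F[[z]] } ⊆ F[[z]]² be the rate-1/2 convolutional code generated by G(z) = [1 + z + z², 2 + z + 2z²]. Then d_free(C) = 6. -/
open PowerSeries

/-- Hamming weight of `v ∈ F[[z]]²`: the extended-natural-number cardinality of the set
of pairs `(l, t)` with `coeff_t (v_l) ≠ 0`. -/
noncomputable def wH {F : Type*} [Field F] (v : Fin 2 → PowerSeries F) : ℕ∞ :=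
  {p : Fin 2 × ℕ | PowerSeries.coeff (R := F) p.2 (v p.1) ≠ 0}.encard

/- ### Auxiliary trellis machinery -/

/-- branch cost -/
def cst (x p q : ZMod 3) : ℕ :=
  (if x + p + q ≠ 0 then 1 else 0) + (if 2*x + p + 2*q ≠ 0 then 1 else 0)

/-- backward potential -/
def Vpot (p q : ZMod 3) : ℕ :=
  if p = 0 then (if q = 0 then 0 else 2) else (if q = 0 then 4 else 3)

lemma edge_ineq : ∀ p q x : ZMod 3, Vpot p q ≤ cst x p q + Vpot x p := by decide
lemma base_ineq : ∀ p q : ZMod 3, Vpot p q ≤ cst 0 p q + cst 0 0 p := by decide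
lemma start_cost : ∀ x : ZMod 3, x ≠ 0 → cst x 0 0 = 2 ∧ Vpot x 0 = 4 := by decide

def rowA (a : ℕ → ZMod 3) : ℕ → ZMod 3
  | 0 => a 0
  | 1 => a 1 + a 0
  | (t+2) => a (t+2) + a (t+1) + a t

def rowB (a : ℕ → ZMod 3) : ℕ → ZMod 3
  | 0 => 2 * a 0
  | 1 => 2 * a 1 + a 0
  | (t+2) => 2 * a (t+2) + a (t+1) + 2 * a t

def cc (a : ℕ → ZMod 3) (p q : ZMod 3) : ℕ → ℕ
  | 0 => cst (a 0) p q
  | 1 => cst (a 1) (a 0) p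
  | (t+2) => cst (a (t+2)) (a (t+1)) (a t)

lemma cc_shift (a : ℕ → ZMod 3) (p q : ZMod 3) :
    ∀ t, cc a p q (t+1) = cc (fun s => a (s+1)) (a 0) p t
  | 0 => rfl
  | 1 => rfl
  | (_+2) => rfl

lemma cc_row (a : ℕ → ZMod 3) (t : ℕ) :
    cc a 0 0 t = (if rowA a t ≠ 0 then 1 else 0) + (if rowB a t ≠ 0 then 1 else 0) := by
  match t with
  | 0 => simp [cc, cst, rowA, rowB]; split_ifs <;> simp_all
  | 1 => simp [cc, cst, rowA, rowB]; split_ifs <;> simp_all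
  | (t+2) => simp [cc, cst, rowA, rowB]; split_ifs <;> simp_all

lemma trellis_ind : ∀ (k : ℕ) (a : ℕ → ZMod 3), (∀ t, k ≤ t → a t = 0) → ∀ p q : ZMod 3,
    Vpot p q ≤ ∑ t ∈ Finset.range (k+2), cc a p q t := by
  intro k
  induction k with
  | zero =>
    intro a ha p q
    have h0 : a 0 = 0 := ha 0 (le_refl 0)
    have h1 : a 1 = 0 := ha 1 (by omega)
    rw [Finset.sum_range_succ, Finset.sum_range_one]
    show Vpot p q ≤ cc a p q 0 + cc a p q 1
    simp only [cc, h0, h1]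
    exact base_ineq p q
  | succ k ih =>
    intro a ha p q
    have hsum : ∑ t ∈ Finset.range (k+1+2), cc a p q t
        = (∑ t ∈ Finset.range (k+2), cc (fun s => a (s+1)) (a 0) p t) + cc a p q 0 := by
      rw [Finset.sum_range_succ' (cc a p q) (k+2)]
      congr 1
      exact Finset.sum_congr rfl fun t _ => cc_shift a p q t
    have hih := ih (fun s => a (s+1)) (fun t ht => ha (t+1) (by omega)) (a 0) p
    have hedge := edge_ineq p q (a 0)
    have hcc0 : cc a p q 0 = cst (a 0) p q := rfl
    omega
  
lemma key_bound (a : ℕ → ZMod 3) (h0 : a 0 ≠ 0) (D : ℕ) (hD : ∀ t, D < t → a t = 0) :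
    6 ≤ ∑ t ∈ Finset.range (D+3), cc a 0 0 t := by
  have hsum : ∑ t ∈ Finset.range (D+3), cc a 0 0 t
      = (∑ t ∈ Finset.range (D+2), cc (fun s => a (s+1)) (a 0) 0 t) + cc a 0 0 0 := by
    rw [Finset.sum_range_succ' (cc a 0 0) (D+2)]
    congr 1
    exact Finset.sum_congr rfl fun t _ => cc_shift a 0 0 t
  have hih := trellis_ind D (fun s => a (s+1)) (fun t ht => hD (t+1) (by omega)) (a 0) 0
  obtain ⟨hc, hv⟩ := start_cost (a 0) h0
  have hcc0 : cc a 0 0 0 = cst (a 0) 0 0 := rfl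
  omega

/- ### Coefficient formulas -/

lemma coeff_mul_g1 (u : PowerSeries (ZMod 3)) (t : ℕ) :
    coeff (R := ZMod 3) t (u * (1 + X + X^2)) = rowA (fun s => coeff (R := ZMod 3) s u) t := by
  have h : u * (1 + X + X^2) = u + u * X^1 + u * X^2 := by ring
  rw [h, map_add, map_add, coeff_mul_X_pow', coeff_mul_X_pow']
  match t with
  | 0 => simp [rowA]
  | 1 => simp [rowA]
  | (t+2) =>
    simp only [rowA]
    rw [if_pos (by omega), if_pos (by omega)]
    have e1 : t + 2 - 1 = t + 1 := by omega
    have e2 : t + 2 - 2 = t := by omega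
    rw [e1, e2]

lemma coeff_mul_g2 (u : PowerSeries (ZMod 3)) (t : ℕ) :
    coeff (R := ZMod 3) t (u * (2 + X + 2 * X^2)) = rowB (fun s => coeff (R := ZMod 3) s u) t := by
  have h : u * (2 + X + 2 * X^2) = (u + u) + u * X^1 + (u + u) * X^2 := by ring
  rw [h, map_add, map_add, coeff_mul_X_pow', coeff_mul_X_pow', map_add]
  match t with
  | 0 => simp [rowB]; ring
  | 1 => simp [rowB, map_add]; ring
  | (t+2) =>
    simp only [rowB, map_add]
    rw [if_pos (by omega), if_pos (by omega)]
    have e1 : t + 2 - 1 = t + 1 := by omega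
    have e2 : t + 2 - 2 = t := by omega
    rw [e1, e2]
    ring

lemma zmod3_recov : ∀ x y z : ZMod 3, y = 2*((x + y + z) + (2*x + y + 2*z)) := by decide

lemma recov (u : PowerSeries (ZMod 3)) (t : ℕ) :
    coeff (R := ZMod 3) (t+1) u
      = 2 * (coeff (R := ZMod 3) (t+2) (u * (1 + X + X^2))
           + coeff (R := ZMod 3) (t+2) (u * (2 + X + 2 * X^2))) := by
  rw [coeff_mul_g1, coeff_mul_g2]
  show _ = 2 * ((coeff (R := ZMod 3) (t+2) u + coeff (R := ZMod 3) (t+1) u + coeff (R := ZMod 3) t u)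
      + (2 * coeff (R := ZMod 3) (t+2) u + coeff (R := ZMod 3) (t+1) u + 2 * coeff (R := ZMod 3) t u))
  exact zmod3_recov _ _ _

/- ### Lower bound -/

lemma lower_bound (u : PowerSeries (ZMod 3)) (hu : u ≠ 0) :
    6 ≤ wH ![u * (1 + X + X^2), u * (2 + X + 2 * X^2)] := by
  set v : Fin 2 → PowerSeries (ZMod 3) := ![u * (1 + X + X^2), u * (2 + X + 2 * X^2)] with hv
  set S : Set (Fin 2 × ℕ) := {p : Fin 2 × ℕ | PowerSeries.coeff (R := ZMod 3) p.2 (v p.1) ≠ 0} with hS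
  by_cases htop : S.Infinite
  · rw [wH]
    rw [Set.Infinite.encard_eq htop]
    exact le_top
  have hfin : S.Finite := Set.not_infinite.mp htop
  -- bound on coefficients of v
  obtain ⟨N, hN⟩ := (hfin.image Prod.snd).bddAbove
  have hz : ∀ l : Fin 2, ∀ t, N < t → coeff (R := ZMod 3) t (v l) = 0 := by
    intro l t ht
    by_contra hne
    have : t ∈ Prod.snd '' S := ⟨(l, t), hne, rfl⟩
    exact absurd (hN this) (by omega)
  -- coefficients of u vanish beyond N
  have hu0 : ∀ t, N + 1 ≤ t → coeff (R := ZMod 3) t u = 0 := by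
    intro t ht
    obtain ⟨s, rfl⟩ : ∃ s, t = s + 1 := ⟨t - 1, by omega⟩
    rw [recov u s]
    have h1 : coeff (R := ZMod 3) (s+2) (v 0) = 0 := hz 0 (s+2) (by omega)
    have h2 : coeff (R := ZMod 3) (s+2) (v 1) = 0 := hz 1 (s+2) (by omega)
    simp only [hv, Matrix.cons_val_zero, Matrix.cons_val_one, Matrix.head_cons] at h1 h2
    rw [h1, h2]
    ring
  -- least nonzero coefficient of u
  have hex : ∃ t, coeff (R := ZMod 3) t u ≠ 0 := by
    by_contra h
    push_neg at h
    exact hu (PowerSeries.ext fun t => by rw [h t, map_zero])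
  set n := Nat.find hex with hn
  have hne : coeff (R := ZMod 3) n u ≠ 0 := Nat.find_spec hex
  have hmin : ∀ m, m < n → coeff (R := ZMod 3) m u = 0 := by
    intro m hm
    by_contra h
    exact Nat.find_min hex (by omega) h
  -- shifted series
  set w : PowerSeries (ZMod 3) := PowerSeries.mk (fun s => coeff (R := ZMod 3) (n+s) u) with hw
  have huw : u = X^n * w := by
    apply PowerSeries.ext
    intro t
    rcases le_or_gt n t with h | h
    · obtain ⟨d, rfl⟩ : ∃ d, t = d + n := ⟨t - n, by omega⟩
      rw [coeff_X_pow_mul, hw, coeff_mk, Nat.add_comm]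
    · rw [mul_comm, coeff_mul_X_pow', if_neg (by omega), hmin t h]
  have ha0 : coeff (R := ZMod 3) 0 w ≠ 0 := by
    have : coeff (R := ZMod 3) 0 w = coeff (R := ZMod 3) n u := by rw [hw]; simp [coeff_mk]
    rw [this]; exact hne
  have haD : ∀ t, N + 1 < t → coeff (R := ZMod 3) t w = 0 := by
    intro t ht
    rw [hw]
    simp only [coeff_mk]
    exact hu0 (n + t) (by omega)
  have hkey := key_bound (fun s => coeff (R := ZMod 3) s w) ha0 (N+1) haD
  -- the finset of nonzero positions in the window, for w
  set T : Finset (Fin 2 × ℕ) :=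
    (Finset.univ ×ˢ Finset.range (N+1+3)).filter
      (fun p => coeff (R := ZMod 3) p.2 ((![w * (1 + X + X^2), w * (2 + X + 2 * X^2)]) p.1) ≠ 0)
    with hT
  have hcard : ∑ t ∈ Finset.range (N+1+3), cc (fun s => coeff (R := ZMod 3) s w) 0 0 t ≤ T.card := by
    rw [hT, Finset.card_filter, Finset.sum_product_right]
    apply le_of_eq
    apply Finset.sum_congr rfl
    intro t _
    rw [Fin.sum_univ_two]
    simp only [Matrix.cons_val_zero, Matrix.cons_val_one, Matrix.head_cons, cc_row,
      coeff_mul_g1, coeff_mul_g2]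
  -- map the window into the weight set of v
  have hmap : ∀ p ∈ T, ((p.1, p.2 + n) : Fin 2 × ℕ) ∈ S := by
    rintro ⟨l, t⟩ hp
    rw [hT, Finset.mem_filter] at hp
    obtain ⟨-, hp⟩ := hp
    rw [hS, Set.mem_setOf_eq]
    have hvl : ∀ g : PowerSeries (ZMod 3),
        coeff (R := ZMod 3) (t + n) (u * g) = coeff (R := ZMod 3) t (w * g) := by
      intro g
      rw [huw, mul_assoc, coeff_X_pow_mul]
    fin_cases l
    · show coeff (R := ZMod 3) (t + n) (u * (1 + X + X^2)) ≠ 0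
      rw [hvl]
      exact hp
    · show coeff (R := ZMod 3) (t + n) (u * (2 + X + 2 * X^2)) ≠ 0
      rw [hvl]
      exact hp
  -- conclude
  have hinj : Function.Injective (fun p : Fin 2 × ℕ => (p.1, p.2 + n)) := by
    rintro ⟨a1, b1⟩ ⟨a2, b2⟩ h
    simp only [Prod.mk.injEq] at h
    obtain ⟨h1, h2⟩ := h
    simp [h1]; omega
  have hsub : ↑(T.map ⟨_, hinj⟩) ⊆ S := by
    intro p hp
    simp only [Finset.coe_map, Set.mem_image, Finset.mem_coe] at hp
    obtain ⟨q, hq, rfl⟩ := hp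
    exact hmap q hq
  have h6T : 6 ≤ T.card := le_trans hkey hcard
  calc (6 : ℕ∞) ≤ ((T.map ⟨_, hinj⟩).card : ℕ∞) := by
        rw [Finset.card_map]; exact_mod_cast h6T
    _ = (↑(T.map ⟨_, hinj⟩) : Set (Fin 2 × ℕ)).encard := (Set.encard_coe_eq_coe_finsetCard _).symm
    _ ≤ S.encard := Set.encard_le_encard hsub
    _ = wH v := rfl

/- ### Upper bound : the codeword for u = 1 has weight 6 -/

lemma coeff_g1_ne (t : ℕ) :
    coeff (R := ZMod 3) t ((1 : PowerSeries (ZMod 3)) * (1 + X + X^2)) ≠ 0 ↔ t < 3 := by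
  rw [coeff_mul_g1]
  match t with
  | 0 => simp [rowA, coeff_one]
  | 1 => simp [rowA, coeff_one]
  | 2 => simp [rowA, coeff_one]
  | (t+3) => simp [rowA, coeff_one]

lemma coeff_g2_ne (t : ℕ) :
    coeff (R := ZMod 3) t ((1 : PowerSeries (ZMod 3)) * (2 + X + 2 * X^2)) ≠ 0 ↔ t < 3 := by
  rw [coeff_mul_g2]
  match t with
  | 0 => simp [rowB, coeff_one]; decide
  | 1 => simp [rowB, coeff_one]
  | 2 => simp [rowB, coeff_one]; decide
  | (t+3) => simp [rowB, coeff_one]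

lemma upper_eq :
    wH ![(1 : PowerSeries (ZMod 3)) * (1 + X + X^2),
         (1 : PowerSeries (ZMod 3)) * (2 + X + 2 * X^2)] = 6 := by
  rw [wH]
  have hset : {p : Fin 2 × ℕ | coeff (R := ZMod 3) p.2
      ((![(1 : PowerSeries (ZMod 3)) * (1 + X + X^2),
          (1 : PowerSeries (ZMod 3)) * (2 + X + 2 * X^2)]) p.1) ≠ 0}
      = ↑((Finset.univ : Finset (Fin 2)) ×ˢ Finset.range 3) := by
    ext ⟨l, t⟩
    simp only [Set.mem_setOf_eq, Finset.coe_product, Set.mem_prod, Finset.mem_coe,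
      Finset.mem_univ, true_and, Finset.mem_range, Finset.coe_range, Set.mem_Iio]
    fin_cases l
    · simpa using coeff_g1_ne t
    · simpa using coeff_g2_ne t
  rw [hset, Set.encard_coe_eq_coe_finsetCard]
  rw [Finset.card_product, Finset.card_range, Finset.card_univ]
  rfl

/-- the rate-1/2 convolutional code over `ZMod 3` generated by
`G(z) = [1 + X + X ^ 2, 2 + X + 2 * X ^ 2]` has free distance `6`. -/
theorem dfree_eq_14 :
    sInf {w : ℕ∞ | ∃ v : Fin 2 → PowerSeries (ZMod 3),
      (∃ u : PowerSeries (ZMod 3), v = ![u * (1 + X + X ^ 2), u * (2 + X + 2 * X ^ 2)]) ∧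
      v ≠ 0 ∧ w = wH v} = 6 := by
  apply le_antisymm
  · apply sInf_le
    refine ⟨![(1 : PowerSeries (ZMod 3)) * (1 + X + X^2),
              (1 : PowerSeries (ZMod 3)) * (2 + X + 2 * X^2)], ⟨1, rfl⟩, ?_, upper_eq.symm⟩
    intro h
    have h0 := congrFun h 0
    simp only [Matrix.cons_val_zero, Pi.zero_apply, one_mul] at h0
    have := congrArg (coeff (R := ZMod 3) 0) h0
    simp [coeff_one] at this
  · apply le_sInf
    rintro m ⟨v, ⟨u, rfl⟩, hv, rfl⟩
    have hu : u ≠ 0 := by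
      rintro rfl
      apply hv
      funext i
      fin_cases i <;> simp
    exact lower_bound u hu
end

section
/- Let F = 𝔽_3 (ZMod 3) and let C = { (u·(1 + z²), u·(1 + z + z²)) : u ∈ F[[z]] } be the rate-1/2 convolutional code generated by G(z) = [1 + z², 1 + z + z²], which has d_free(C) = 5, row degree ν_1 = 2 and degree δ = 2, with controller-canonical encoder state σ_t(u) = (coeff_{t−1}(u), coeff_{t−2}(u)). Then T_{dfree}(C) = 6; that is: (a) for every u ∈ F[[z]] and every j > 0 such that the total Hamming weight over segments 0,…,j−1 of (u·(1+z²), u·(1+z+z²)) is less than 5 and σ_t(u) ≠ 0 for all 1 ≤ t ≤ j, one has j ≤ 5; and (b) there exists u ∈ F[[z]] for which these conditions hold with j = 5. -/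
open PowerSeries

/-- Total Hamming weight of segments `0, …, j-1` of `v ∈ F[[z]]²`. -/
noncomputable def truncWeight {F : Type*} [Field F] (v : Fin 2 → PowerSeries F) (j : ℕ) : ℕ∞ :=
  {p : Fin 2 × ℕ | p.2 < j ∧ PowerSeries.coeff (R := F) p.2 (v p.1) ≠ 0}.encard

/-- The controller-canonical encoder state `σ_t(u) = (coeff_{t-1}(u), coeff_{t-2}(u))`
(row degree `ν_1 = 2`, coefficients of negative index taken to be `0`) is nonzero. -/
def stateNonzero (u : PowerSeries (ZMod 3)) (t : ℕ) : Prop :=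
  (1 ≤ t ∧ PowerSeries.coeff (R := ZMod 3) (t - 1) u ≠ 0) ∨
    (2 ≤ t ∧ PowerSeries.coeff (R := ZMod 3) (t - 2) u ≠ 0)

lemma truncWeight_eq (v : Fin 2 → PowerSeries (ZMod 3)) (j : ℕ) :
    truncWeight v j = ((∑ t ∈ Finset.range j,
      ((if PowerSeries.coeff (R := ZMod 3) t (v 0) ≠ 0 then 1 else 0) +
       (if PowerSeries.coeff (R := ZMod 3) t (v 1) ≠ 0 then 1 else 0)) : ℕ) : ℕ∞) := by
  have h : {p : Fin 2 × ℕ | p.2 < j ∧ PowerSeries.coeff (R := ZMod 3) p.2 (v p.1) ≠ 0} =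
      ↑(((Finset.univ : Finset (Fin 2)) ×ˢ Finset.range j).filter
        fun p => PowerSeries.coeff (R := ZMod 3) p.2 (v p.1) ≠ 0) := by
    ext ⟨i, t⟩
    simp [and_comm]
  rw [truncWeight, h, Set.encard_coe_eq_coe_finsetCard]
  congr 1
  rw [Finset.card_filter, Finset.sum_product_right]
  refine Finset.sum_congr rfl fun t _ => ?_
  rw [Fin.sum_univ_two]

lemma coeff_g1 (u : PowerSeries (ZMod 3)) (t : ℕ) :
    PowerSeries.coeff (R := ZMod 3) t (u * (1 + X ^ 2)) =
      PowerSeries.coeff (R := ZMod 3) t u +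
      (if 2 ≤ t then PowerSeries.coeff (R := ZMod 3) (t - 2) u else 0) := by
  rw [mul_add, mul_one, map_add, coeff_mul_X_pow']

lemma coeff_g2 (u : PowerSeries (ZMod 3)) (t : ℕ) :
    PowerSeries.coeff (R := ZMod 3) t (u * (1 + X + X ^ 2)) =
      PowerSeries.coeff (R := ZMod 3) t u +
      (if 1 ≤ t then PowerSeries.coeff (R := ZMod 3) (t - 1) u else 0) +
      (if 2 ≤ t then PowerSeries.coeff (R := ZMod 3) (t - 2) u else 0) := by
  rw [mul_add, mul_add, mul_one, map_add, map_add, coeff_mul_X_pow',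
    show (X : PowerSeries (ZMod 3)) = X ^ 1 by rw [pow_one], coeff_mul_X_pow']

/-- for the rate-1/2 code over `𝔽₃` generated by
`G(z) = [1 + z², 1 + z + z²]` (which has `d_free = 5`, `ν_1 = 2`, `δ = 2`), one has
`T_{dfree}(C) = 6`; that is: (a) every pair `(u, j)` determining an element of
`S_{dfree}` satisfies `j ≤ 5`, and (b) some `u` yields an element of `S_{dfree}` with
`j = 5`. -/
theorem Tdfree_eq_six :
    (∀ (u : PowerSeries (ZMod 3)) (j : ℕ), 0 < j →
      truncWeight ![u * (1 + X ^ 2), u * (1 + X + X ^ 2)] j < 5 →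
      (∀ t : ℕ, 1 ≤ t → t ≤ j → stateNonzero u t) →
      j ≤ 5) ∧
    (∃ u : PowerSeries (ZMod 3),
      truncWeight ![u * (1 + X ^ 2), u * (1 + X + X ^ 2)] 5 < 5 ∧
      ∀ t : ℕ, 1 ≤ t → t ≤ 5 → stateNonzero u t) := by
  constructor
  · intro u j hj hw hs
    by_contra hle
    push_neg at hle
    have hmono : truncWeight ![u * (1 + X ^ 2), u * (1 + X + X ^ 2)] 6 ≤
        truncWeight ![u * (1 + X ^ 2), u * (1 + X + X ^ 2)] j :=
      Set.encard_mono (fun p hp => ⟨lt_of_lt_of_le hp.1 (by omega), hp.2⟩)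
    have h6 := lt_of_le_of_lt hmono hw
    rw [truncWeight_eq] at h6
    have h6' : (∑ t ∈ Finset.range 6,
        ((if PowerSeries.coeff (R := ZMod 3) t
            ((![u * (1 + X ^ 2), u * (1 + X + X ^ 2)]) 0) ≠ 0 then 1 else 0) +
         (if PowerSeries.coeff (R := ZMod 3) t
            ((![u * (1 + X ^ 2), u * (1 + X + X ^ 2)]) 1) ≠ 0 then 1 else 0))) < 5 := by
      exact_mod_cast h6
    have s1 := hs 1 (by norm_num) (by omega)
    have s3 := hs 3 (by norm_num) (by omega)
    have s4 := hs 4 (by norm_num) (by omega)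
    have s5 := hs 5 (by norm_num) (by omega)
    have s6 := hs 6 (by norm_num) (by omega)
    simp only [stateNonzero] at s1 s3 s4 s5 s6
    norm_num at s1 s3 s4 s5 s6
    norm_num [Finset.sum_range_succ, coeff_g1, coeff_g2,
      Matrix.cons_val_zero, Matrix.cons_val_one, Matrix.head_cons] at h6'
    revert h6' s1 s3 s4 s5 s6
    generalize PowerSeries.coeff (R := ZMod 3) 5 u = f
    generalize PowerSeries.coeff (R := ZMod 3) 4 u = e
    generalize PowerSeries.coeff (R := ZMod 3) 3 u = d
    generalize PowerSeries.coeff (R := ZMod 3) 2 u = c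
    generalize PowerSeries.coeff (R := ZMod 3) 1 u = b
    generalize (PowerSeries.constantCoeff (R := ZMod 3)) u = a
    revert a b c d e f
    decide
  · refine ⟨PowerSeries.mk fun n =>
      if n = 0 then 1 else if n = 2 then 2 else if n = 4 then 1 else 0, ?_, ?_⟩
    · rw [truncWeight_eq]
      norm_num [Finset.sum_range_succ, coeff_g1, coeff_g2, PowerSeries.coeff_mk,
        Matrix.cons_val_zero, Matrix.cons_val_one, Matrix.head_cons]
      decide
    · intro t h1 h5
      interval_cases t <;>
        simp [stateNonzero, PowerSeries.coeff_mk] <;> decide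
end
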